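/- Let K ≥ 1, let a ≥ 1 be an integer, let p ≥ 1 be real, let r be a nonzero real, and let T ⊆ {1,…,K} be nonempty. For J ∈ ℝ^K set M(J) = ∑_{j∈T} J_j and L(J) = ∑_{j∈T} |J_j|^p, and consider the rank-one-correlation Hebbian dynamics with weight exponent c = 1: dJ_i/dt = r^{a+1} M(J)^a ( χ_T(i) J_i − J_i L(J) ), where χ_T(i) = 1 if i ∈ T and 0 otherwise. Then: (1) every J* ∈ ℝ^K with J*_i = 0 for all i ∉ T and L(J*) = 1 is an equilibrium; and (2) along any differentiable solution J : [0,∞) → ℝ^K, the pair (L, M) = (L(J(t)), M(J(t))) satisfies the closed system dL/dt = p r^{a+1} M^a L (1 − L) and dM/dt = r^{a+1} M^{a+1} (1 − L). -/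

import Mathlib

open Filter Topology

open Asymptotics in

lemma abs_rpow_chain (p : ℝ) (hp : 1 ≤ p) (g : ℝ → ℝ) (c t : ℝ)
    (h : HasDerivAt g (c * g t) t) :
    HasDerivAt (fun s => |g s| ^ p) (p * |g t| ^ p * c) t := by
  have hp0 : p ≠ 0 := by linarith
  rcases lt_trichotomy (g t) 0 with hneg | hzero | hpos
  · have hx : (0:ℝ) < -(g t) := by linarith
    have hd : HasDerivAt (fun s => (-(g s)) ^ p)
        (p * (-(g t)) ^ (p - 1) * (-(c * g t))) t := by
      have hbase := Real.hasDerivAt_rpow_const (p := p) (x := -(g t)) (Or.inl hx.ne')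
      exact hbase.comp t h.neg
    have heq : p * (-(g t)) ^ (p - 1) * (-(c * g t)) = p * |g t| ^ p * c := by
      rw [abs_of_neg hneg]
      have : (-(g t)) ^ (p - 1) = (-(g t)) ^ p / (-(g t)) := Real.rpow_sub_one hx.ne' p
      rw [this]
      field_simp [hneg.ne]
    have hev : (fun s => |g s| ^ p) =ᶠ[𝓝 t] fun s => (-(g s)) ^ p := by
      have : ∀ᶠ s in 𝓝 t, g s < 0 := h.continuousAt.eventually_lt_const hneg
      filter_upwards [this] with s hs
      rw [abs_of_neg hs]
    exact heq ▸ (hd.congr_of_eventuallyEq hev)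
  · rw [hzero, abs_zero, Real.zero_rpow hp0, mul_zero, zero_mul]
    have h0 : HasDerivAt g 0 t := by rwa [hzero, mul_zero] at h
    have hcont := h0.continuousAt
    rw [hasDerivAt_iff_isLittleO] at h0 ⊢
    simp only [hzero, abs_zero, Real.zero_rpow hp0, sub_zero, smul_zero] at h0 ⊢
    have hbig : (fun s => |g s| ^ p) =O[𝓝 t] g := by
      apply IsBigO.of_bound 1
      have : ∀ᶠ s in 𝓝 t, |g s| < 1 := by
        have ha1 : ∀ᶠ s in 𝓝 t, g s < 1 :=
          hcont.eventually_lt_const (by rw [hzero]; norm_num)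
        have ha2 : ∀ᶠ s in 𝓝 t, (-1:ℝ) < g s :=
          hcont.eventually_const_lt (by rw [hzero]; norm_num)
        filter_upwards [ha1, ha2] with s h1 h2
        rw [abs_lt]; exact ⟨h2, h1⟩
      filter_upwards [this] with s hs
      rw [one_mul, Real.norm_eq_abs, Real.norm_eq_abs,
        abs_of_nonneg (Real.rpow_nonneg (abs_nonneg _) p)]
      rcases eq_or_lt_of_le (abs_nonneg (g s)) with h0' | h0'
      · rw [← h0', Real.zero_rpow hp0]
      · calc |g s| ^ p ≤ |g s| ^ (1:ℝ) :=
              Real.rpow_le_rpow_of_exponent_ge h0' hs.le hp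
          _ = |g s| := Real.rpow_one _
    exact hbig.trans_isLittleO h0
  · have hd : HasDerivAt (fun s => (g s) ^ p)
        (p * (g t) ^ (p - 1) * (c * g t)) t := by
      have hbase := Real.hasDerivAt_rpow_const (p := p) (x := g t) (Or.inl hpos.ne')
      exact hbase.comp t h
    have heq : p * (g t) ^ (p - 1) * (c * g t) = p * |g t| ^ p * c := by
      rw [abs_of_pos hpos]
      rw [Real.rpow_sub_one hpos.ne' p]
      field_simp
    have hev : (fun s => |g s| ^ p) =ᶠ[𝓝 t] fun s => (g s) ^ p := by
      have : ∀ᶠ s in 𝓝 t, 0 < g s := h.continuousAt.eventually_const_lt hpos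
      filter_upwards [this] with s hs
      rw [abs_of_pos hs]
    exact heq ▸ (hd.congr_of_eventuallyEq hev)

/-- Rank-one piecewise-constant input correlations with weight exponent `c = 1`:
every weight vector supported on `T` with unit `ℓᵖ`-mass is an equilibrium, and along
any solution the pair `(L, M)` satisfies the closed system
`dL/dt = p r^{a+1} Mᵃ L (1 - L)`, `dM/dt = r^{a+1} M^{a+1} (1 - L)`. -/
theorem stmt19 (K : ℕ) (hK : 1 ≤ K) (a : ℕ) (ha : 1 ≤ a)
    (p : ℝ) (hp : 1 ≤ p) (r : ℝ) (hr : r ≠ 0)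
    (T : Finset (Fin K)) (hT : T.Nonempty)
    (F : (Fin K → ℝ) → (Fin K → ℝ))
    (hF : F = fun J i => r ^ (a + 1) * (∑ j ∈ T, J j) ^ a *
      ((if i ∈ T then J i else 0) - J i * ∑ j ∈ T, |J j| ^ p)) :
    (∀ Js : Fin K → ℝ, (∀ i ∉ T, Js i = 0) → (∑ j ∈ T, |Js j| ^ p) = 1 →
      F Js = 0) ∧
    (∀ J : ℝ → Fin K → ℝ,
      (∀ t ≥ (0 : ℝ), ∀ i, HasDerivAt (fun s => J s i) (F (J t) i) t) →
      ∀ t ≥ (0 : ℝ),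
        HasDerivAt (fun s => ∑ j ∈ T, |J s j| ^ p)
          (p * r ^ (a + 1) * (∑ j ∈ T, J t j) ^ a * (∑ j ∈ T, |J t j| ^ p)
            * (1 - ∑ j ∈ T, |J t j| ^ p)) t ∧
        HasDerivAt (fun s => ∑ j ∈ T, J s j)
          (r ^ (a + 1) * (∑ j ∈ T, J t j) ^ (a + 1) * (1 - ∑ j ∈ T, |J t j| ^ p)) t) := by
  constructor
  · intro Js hsupp hL
    funext i
    subst hF
    simp only [hL, mul_one, Pi.zero_apply]
    by_cases hi : i ∈ T
    · simp [hi]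
    · simp [hi, hsupp i hi]
  · intro J hJ t ht
    set M := ∑ j ∈ T, J t j with hM
    set L := ∑ j ∈ T, |J t j| ^ p with hL
    set c : ℝ := r ^ (a + 1) * M ^ a * (1 - L) with hc
    have hd : ∀ j ∈ T, HasDerivAt (fun s => J s j) (c * J t j) t := by
      intro j hj
      have := hJ t ht j
      rw [hF] at this
      simp only [if_pos hj] at this
      convert this using 1
      rw [hc, hM, hL]; ring
    constructor
    · have hsum : HasDerivAt (fun s => ∑ j ∈ T, |J s j| ^ p)
          (∑ j ∈ T, p * |J t j| ^ p * c) t :=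
        HasDerivAt.fun_sum fun j hj => abs_rpow_chain p hp (fun s => J s j) c t (hd j hj)
      convert hsum using 1
      have he : ∑ j ∈ T, p * |J t j| ^ p * c = (∑ j ∈ T, |J t j| ^ p) * (p * c) := by
        rw [Finset.sum_mul]; exact Finset.sum_congr rfl fun j _ => by ring
      rw [he, ← hL, hc]; ring
    · have hsum : HasDerivAt (fun s => ∑ j ∈ T, J s j)
          (∑ j ∈ T, c * J t j) t :=
        HasDerivAt.fun_sum fun j hj => hd j hj
      convert hsum using 1
      rw [← Finset.mul_sum, ← hM, hc, pow_succ]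
      ring
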